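/- Let r > 0 and let w be a real-valued function that is continuous on the punctured closed ball \bar{B}_r(0) ∖ {0} in ℝ³, twice continuously differentiable on the punctured open ball B_r(0) ∖ {0}, and satisfies w ≥ 0 on \bar{B}_r(0) ∖ {0} and Δw ≤ 0 on B_r(0) ∖ {0}. Then for every x ∈ \bar{B}_r(0) ∖ {0}, w(x) ≥ min_{∂B_r(0)} w. -/

import Mathlib

open MeasureTheory Filter Metric

open Topology

noncomputable section

abbrev E3 := EuclideanSpace ℝ (Fin 3)

/-- The Euclidean Laplacian: sum of pure second partial derivatives. -/
def lap (f : E3 → ℝ) (x : E3) : ℝ :=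
  ∑ i : Fin 3,
    fderiv ℝ (fun z => fderiv ℝ f z (EuclideanSpace.single i 1)) x (EuclideanSpace.single i 1)

def ee (i : Fin 3) : E3 := EuclideanSpace.single i 1
def P (i : Fin 3) : E3 →L[ℝ] ℝ := EuclideanSpace.proj i
def gfun (y : E3) : ℝ := ∑ i, (y i)^2
def hbar (y : E3) : ℝ := (Real.sqrt (gfun y))⁻¹
def Gd (z : E3) : E3 →L[ℝ] ℝ := ∑ i, (2 * z i) • P i

lemma gfun_eq (y : E3) : gfun y = ‖y‖^2 := by
  rw [EuclideanSpace.norm_eq, Real.sq_sqrt (by positivity)]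
  simp [gfun, Real.norm_eq_abs, sq_abs]

lemma gfun_pos {y : E3} (hy : y ≠ 0) : 0 < gfun y := by
  rw [gfun_eq]
  have : ‖y‖ ≠ 0 := norm_ne_zero_iff.mpr hy
  positivity

lemma hbar_eq (y : E3) : hbar y = ‖y‖⁻¹ := by
  rw [hbar, gfun_eq, Real.sqrt_sq (norm_nonneg y)]

lemma hasFDerivAt_gfun (z : E3) : HasFDerivAt gfun (Gd z) z := by
  have : ∀ i : Fin 3, HasFDerivAt (fun y : E3 => (y i)^2) ((2 * z i) • P i) z := by
    intro i
    have h := ((P i).hasFDerivAt (x := z)).mul ((P i).hasFDerivAt (x := z))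
    have e1 : (fun y : E3 => (y i)^2) = ⇑(P i) * ⇑(P i) := by ext y; simp [P, sq]
    have e2 : ((2 * z i) • P i : E3 →L[ℝ] ℝ) = P i z • P i + P i z • P i :=
      ContinuousLinearMap.ext fun v => by
        show (2 * z i) * v i = z i * v i + z i * v i; ring
    rw [e1, e2]; exact h
  exact HasFDerivAt.fun_sum (fun i _ => this i)

lemma Gd_apply (z : E3) (i : Fin 3) : Gd z (ee i) = 2 * z i := by
  simp [Gd, P, ee, EuclideanSpace.single_apply]

def ψ (u : ℝ) : ℝ := -(u * Real.sqrt u)⁻¹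
def Θ (i : Fin 3) (z : E3) : ℝ := ψ (gfun z) * z i

lemma hasFDerivAt_hbar {z : E3} (hz : z ≠ 0) :
    HasFDerivAt hbar ((-(1/(2*Real.sqrt (gfun z)))/(Real.sqrt (gfun z))^2) • Gd z) z := by
  have ht : 0 < gfun z := gfun_pos hz
  have hs : Real.sqrt (gfun z) ≠ 0 := by positivity
  have h1 : HasDerivAt (fun u => (Real.sqrt u)⁻¹)
      (-(1/(2*Real.sqrt (gfun z)))/(Real.sqrt (gfun z))^2) (gfun z) :=
    (Real.hasDerivAt_sqrt ht.ne').inv hs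
  exact h1.comp_hasFDerivAt z (hasFDerivAt_gfun z)

lemma fderiv_hbar_apply {z : E3} (hz : z ≠ 0) (i : Fin 3) :
    fderiv ℝ hbar z (ee i) = Θ i z := by
  rw [(hasFDerivAt_hbar hz).fderiv]
  have ht : 0 < gfun z := gfun_pos hz
  have hs : 0 < Real.sqrt (gfun z) := Real.sqrt_pos.mpr ht
  have hsq : Real.sqrt (gfun z) ^ 2 = gfun z := Real.sq_sqrt ht.le
  simp only [ContinuousLinearMap.coe_smul', Pi.smul_apply, Gd_apply, smul_eq_mul, Θ, ψ]
  rw [← hsq]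
  field_simp
  rw [Real.sqrt_sq hs.le]

def ψd (t : ℝ) : ℝ := (Real.sqrt t + t * (1/(2*Real.sqrt t))) / (t*Real.sqrt t)^2
def θ (i : Fin 3) (p : E3) : ℝ := ψ (gfun p) + p i * (ψd (gfun p) * (2 * p i))

lemma hasDerivAt_ψ {t : ℝ} (ht : 0 < t) : HasDerivAt ψ (ψd t) t := by
  have hs : Real.sqrt t ≠ 0 := by positivity
  have hf : HasDerivAt (fun u => u * Real.sqrt u) (1 * Real.sqrt t + t * (1/(2*Real.sqrt t))) t :=
    (hasDerivAt_id t).mul (Real.hasDerivAt_sqrt ht.ne')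
  have hne : t * Real.sqrt t ≠ 0 := by positivity
  have := (hf.inv hne).neg
  refine this.congr_deriv ?_
  unfold ψd; field_simp

lemma hasFDerivAt_Theta {p : E3} (hp : p ≠ 0) (i : Fin 3) :
    HasFDerivAt (Θ i) (ψ (gfun p) • (P i : E3 →L[ℝ] ℝ) + p i • (ψd (gfun p) • Gd p)) p := by
  have h1 : HasFDerivAt (fun z : E3 => ψ (gfun z)) (ψd (gfun p) • Gd p) p :=
    (hasDerivAt_ψ (gfun_pos hp)).comp_hasFDerivAt p (hasFDerivAt_gfun p)
  have h2 := h1.mul ((P i).hasFDerivAt (x := p))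
  exact h2

lemma theta_sum {p : E3} (hp : p ≠ 0) : ∑ i, θ i p = 0 := by
  have ht : 0 < gfun p := gfun_pos hp
  have hs : 0 < Real.sqrt (gfun p) := Real.sqrt_pos.mpr ht
  have hsq : Real.sqrt (gfun p) ^ 2 = gfun p := Real.sq_sqrt ht.le
  have hsum : ∑ i, (p i)^2 = gfun p := rfl
  have step : ∑ i, θ i p = 3 * ψ (gfun p) + 2 * ψd (gfun p) * gfun p := by
    have : ∀ i : Fin 3, θ i p = ψ (gfun p) + (2 * ψd (gfun p)) * (p i)^2 := by
      intro i; rw [θ]; ring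
    rw [Finset.sum_congr rfl (fun i _ => this i), Finset.sum_add_distrib, ← Finset.mul_sum, hsum]
    simp
    try ring
  rw [step, ψ, ψd]
  field_simp
  linear_combination (-1) * hsq

lemma second_partial_nonneg {f : E3 → ℝ} {p : E3} {U : Set E3} (e : E3)
    (hU : IsOpen U) (hp : p ∈ U) (hfd : DifferentiableOn ℝ f U)
    (hF : DifferentiableAt ℝ (fun z => fderiv ℝ f z e) p)
    (hmin : IsLocalMin f p) :
    0 ≤ fderiv ℝ (fun z => fderiv ℝ f z e) p e := by
  by_contra hQ
  push_neg at hQ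
  set F := fun z => fderiv ℝ f z e with hFdef
  set Q := fderiv ℝ F p e with hQdef
  set L := fun t : ℝ => p + t • e with hLdef
  have hline : ∀ t : ℝ, HasDerivAt L e t := by
    intro t
    simpa [hLdef] using ((hasDerivAt_id t).smul_const e).const_add p
  have hL0 : L 0 = p := by simp [hLdef]
  have hcontL : Continuous L := by
    exact continuous_const.add (continuous_id.smul continuous_const)
  have hF0 : F p = 0 := by
    rw [hFdef]; simp only []
    rw [hmin.fderiv_eq_zero]; rfl
  -- ψ = F ∘ L has derivative Q at 0
  have hψ : HasDerivAt (F ∘ L) Q 0 := by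
    have h : HasFDerivAt F (fderiv ℝ F p) (L 0) := by rw [hL0]; exact hF.hasFDerivAt
    exact h.comp_hasDerivAt 0 (hline 0)
  have hsl : Filter.Tendsto (slope (F ∘ L) 0) (𝓝[≠] 0) (𝓝 Q) :=
    hasDerivAt_iff_tendsto_slope.mp hψ
  have ev1 : ∀ᶠ t in 𝓝[>] (0:ℝ), slope (F ∘ L) 0 t < Q/2 := by
    have : ∀ᶠ t in 𝓝[≠] (0:ℝ), slope (F ∘ L) 0 t < Q/2 :=
      hsl.eventually_lt_const (by linarith)
    exact this.filter_mono (nhdsWithin_mono 0 (fun t ht => by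
      simp only [Set.mem_compl_iff, Set.mem_singleton_iff]
      exact ne_of_gt ht))
  have ev2 : ∀ᶠ t in 𝓝[>] (0:ℝ), L t ∈ U := by
    have h1 : Filter.Tendsto L (𝓝 0) (𝓝 p) := by
      rw [← hL0]; exact hcontL.continuousAt
    exact (h1.eventually (hU.eventually_mem hp)).filter_mono nhdsWithin_le_nhds
  have ev3 : ∀ᶠ t in 𝓝[>] (0:ℝ), f p ≤ f (L t) := by
    have h1 : Filter.Tendsto L (𝓝 0) (𝓝 p) := by
      rw [← hL0]; exact hcontL.continuousAt
    exact (h1.eventually hmin).filter_mono nhdsWithin_le_nhds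
  obtain ⟨c, hc, hall⟩ := (nhdsGT_basis (0:ℝ)).eventually_iff.mp ((ev1.and ev2).and ev3)
  set b := c/2 with hbdef
  have hb : 0 < b := by positivity
  have hbc : b < c := by rw [hbdef]; linarith
  have hLU : ∀ t ∈ Set.Icc (0:ℝ) b, L t ∈ U := by
    intro t ht
    rcases eq_or_lt_of_le ht.1 with h0 | h0
    · rw [← h0, hL0]; exact hp
    · exact ((hall ⟨h0, lt_of_le_of_lt ht.2 hbc⟩).1).2
  have hφd : ∀ t ∈ Set.Icc (0:ℝ) b, HasDerivAt (f ∘ L) (F (L t)) t := by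
    intro t ht
    have hd : DifferentiableAt ℝ f (L t) :=
      hfd.differentiableAt (hU.mem_nhds (hLU t ht))
    exact hd.hasFDerivAt.comp_hasDerivAt t (hline t)
  have hcont : ContinuousOn (f ∘ L) (Set.Icc 0 b) :=
    fun t ht => ((hφd t ht).continuousAt).continuousWithinAt
  have hder_neg : ∀ t ∈ interior (Set.Icc (0:ℝ) b), deriv (f ∘ L) t < 0 := by
    intro t ht
    rw [interior_Icc] at ht
    have htc : t ∈ Set.Ioo (0:ℝ) c := ⟨ht.1, lt_trans ht.2 hbc⟩
    rw [(hφd t ⟨le_of_lt ht.1, le_of_lt ht.2⟩).deriv]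
    have hsl' := ((hall htc).1).1
    have : slope (F ∘ L) 0 t = F (L t) / t := by
      rw [slope_def_field]; simp [hL0, hF0]
    rw [this] at hsl'
    have h2 := (div_lt_iff₀ ht.1).mp hsl'
    have h3 : Q / 2 * t < 0 := mul_neg_of_neg_of_pos (by linarith) ht.1
    linarith
  have hanti : StrictAntiOn (f ∘ L) (Set.Icc 0 b) :=
    strictAntiOn_of_deriv_neg (convex_Icc 0 b) hcont hder_neg
  have h1 : (f ∘ L) b < (f ∘ L) 0 :=
    hanti (Set.left_mem_Icc.mpr hb.le) (Set.right_mem_Icc.mpr hb.le) hb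
  have h2 : f p ≤ f (L b) := (hall ⟨hb, hbc⟩).2
  rw [Function.comp_apply, Function.comp_apply, hL0] at h1
  exact absurd (lt_of_le_of_lt h2 h1) (lt_irrefl _)

lemma key {s : Set E3} (hs : IsOpen s) (hs0 : ∀ z ∈ s, z ≠ (0:E3)) {w : E3 → ℝ}
    (hw : ContDiffOn ℝ 2 w s) {p : E3} (hp : p ∈ s) (a b c : ℝ)
    (hmin : IsLocalMin (fun y => w y + a * hbar y + b * gfun y + c) p) :
    0 ≤ lap w p + 6 * b := by
  set vfun := fun y => w y + a * hbar y + b * gfun y + c with hvdef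
  have hp0 : p ≠ 0 := hs0 p hp
  -- differentiability on s
  have hwd : ∀ z ∈ s, DifferentiableAt ℝ w z := fun z hz =>
    (hw.differentiableOn (by norm_num)).differentiableAt (hs.mem_nhds hz)
  have hbd : ∀ z : E3, z ≠ 0 → DifferentiableAt ℝ hbar z := fun z hz =>
    (hasFDerivAt_hbar hz).differentiableAt
  have hgd : ∀ z : E3, DifferentiableAt ℝ gfun z := fun z =>
    (hasFDerivAt_gfun z).differentiableAt
  have hvd : ∀ z ∈ s, DifferentiableAt ℝ vfun z := by
    intro z hz
    exact (((hwd z hz).add (((hbd z (hs0 z hz)).const_mul a))).add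
      ((hgd z).const_mul b)).add_const c
  -- pointwise formula for first derivative applied to ee i
  have hfd1 : ∀ i : Fin 3, ∀ z ∈ s,
      fderiv ℝ vfun z (ee i)
        = fderiv ℝ w z (ee i) + (a * Θ i z + b * (2 * z i)) := by
    intro i z hz
    have hz0 := hs0 z hz
    have e0 : fderiv ℝ vfun z
        = fderiv ℝ (fun y => w y + a * hbar y + b * gfun y) z := by
      rw [hvdef]
      exact fderiv_add_const c
    have d1 : DifferentiableAt ℝ (fun y => w y + a * hbar y) z :=
      (hwd z hz).add ((hbd z hz0).const_mul a)
    have d2 : DifferentiableAt ℝ (fun y => b * gfun y) z := (hgd z).const_mul b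
    rw [e0, fderiv_fun_add d1 d2, fderiv_fun_add (hwd z hz) ((hbd z hz0).const_mul a),
      fderiv_const_mul (hbd z hz0) a, fderiv_const_mul (hgd z) b]
    simp only [ContinuousLinearMap.add_apply, ContinuousLinearMap.coe_smul',
      Pi.smul_apply, smul_eq_mul]
    rw [fderiv_hbar_apply hz0 i, (hasFDerivAt_gfun z).fderiv, Gd_apply]
    ring
  -- value of the second derivative of each part
  have hA2 : ∀ i : Fin 3, HasFDerivAt (fun z => a * Θ i z)
      (a • (ψ (gfun p) • (P i : E3 →L[ℝ] ℝ) + p i • (ψd (gfun p) • Gd p))) p :=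
    fun i => (hasFDerivAt_Theta hp0 i).const_mul a
  have hA3 : ∀ i : Fin 3, HasFDerivAt (fun z : E3 => b * (2 * z i))
      ((b*2) • (P i : E3 →L[ℝ] ℝ)) p := by
    intro i
    have := ((P i).hasFDerivAt (x := p)).const_mul (b*2)
    refine this.congr_of_eventuallyEq (Filter.Eventually.of_forall fun z => ?_)
    show b * (2 * z i) = b * 2 * z i; ring
  have hwfd : ∀ i : Fin 3, DifferentiableAt ℝ (fun z => fderiv ℝ w z (ee i)) p := by
    intro i
    have h1 : ContDiffOn ℝ 1 (fderiv ℝ w) s := hw.fderiv_of_isOpen hs (by norm_num)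
    have h2 : DifferentiableAt ℝ (fderiv ℝ w) p :=
      (h1.differentiableOn (by norm_num)).differentiableAt (hs.mem_nhds hp)
    exact h2.clm_apply (differentiableAt_const _)
  -- second partials
  have hspi : ∀ i : Fin 3,
      fderiv ℝ (fun z => fderiv ℝ vfun z (ee i)) p (ee i)
        = fderiv ℝ (fun z => fderiv ℝ w z (ee i)) p (ee i) + (a * θ i p + b * 2) := by
    intro i
    have hev : (fun z => fderiv ℝ vfun z (ee i))
        =ᶠ[nhds p] (fun z => fderiv ℝ w z (ee i) + (a * Θ i z + b * (2 * z i))) := by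
      filter_upwards [hs.eventually_mem hp] with z hz
      exact hfd1 i z hz
    rw [hev.fderiv_eq]
    have dsum : DifferentiableAt ℝ (fun z : E3 => a * Θ i z + b * (2 * z i)) p :=
      (hA2 i).differentiableAt.add (hA3 i).differentiableAt
    rw [fderiv_fun_add (hwfd i) dsum, fderiv_fun_add (hA2 i).differentiableAt (hA3 i).differentiableAt,
      (hA2 i).fderiv, (hA3 i).fderiv]
    simp only [ContinuousLinearMap.add_apply, ContinuousLinearMap.coe_smul',
      Pi.smul_apply, smul_eq_mul]
    have hP1 : (P i : E3 →L[ℝ] ℝ) (ee i) = 1 := by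
      simp [P, ee, EuclideanSpace.single_apply]
    rw [Gd_apply, hP1, θ]
    ring
  -- nonnegativity of second partials of vfun
  have hnn : ∀ i : Fin 3, 0 ≤ fderiv ℝ (fun z => fderiv ℝ vfun z (ee i)) p (ee i) := by
    intro i
    apply second_partial_nonneg (ee i) hs hp (fun z hz => (hvd z hz).differentiableWithinAt)
      ?_ hmin
    have hev : (fun z => fderiv ℝ vfun z (ee i))
        =ᶠ[nhds p] (fun z => fderiv ℝ w z (ee i) + (a * Θ i z + b * (2 * z i))) := by
      filter_upwards [hs.eventually_mem hp] with z hz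
      exact hfd1 i z hz
    rw [hev.differentiableAt_iff]
    exact (hwfd i).add ((hA2 i).differentiableAt.add (hA3 i).differentiableAt)
  have hsum : 0 ≤ ∑ i : Fin 3, fderiv ℝ (fun z => fderiv ℝ vfun z (ee i)) p (ee i) :=
    Finset.sum_nonneg (fun i _ => hnn i)
  have heq : ∑ i : Fin 3, fderiv ℝ (fun z => fderiv ℝ vfun z (ee i)) p (ee i)
      = lap w p + (a * ∑ i, θ i p + 6 * b) := by
    rw [Finset.sum_congr rfl (fun i _ => hspi i), Finset.sum_add_distrib, lap]
    rw [Finset.sum_add_distrib, ← Finset.mul_sum]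
    simp only [ee]
    norm_num
    ring
  rw [heq, theta_sum hp0] at hsum
  linarith

lemma hbar_continuousOn {A : Set E3} (hA : ∀ z ∈ A, z ≠ (0:E3)) : ContinuousOn hbar A := by
  have hg : Continuous gfun := by
    apply continuous_finset_sum
    intro i _
    exact ((P i).continuous).pow 2
  apply ContinuousOn.inv₀ (Real.continuous_sqrt.comp hg).continuousOn
  intro z hz
  exact (Real.sqrt_pos.mpr (gfun_pos (hA z hz))).ne'

theorem stmt_11_aux (r : ℝ) (hr : 0 < r) (w : E3 → ℝ)
    (hwcont : ContinuousOn w (closedBall (0 : E3) r \ {0}))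
    (hwC2 : ContDiffOn ℝ 2 w (ball (0 : E3) r \ {0}))
    (hwnonneg : ∀ x ∈ closedBall (0 : E3) r \ {0}, 0 ≤ w x)
    (hlap : ∀ x ∈ ball (0 : E3) r \ {0}, lap w x ≤ 0) :
    ∀ x ∈ closedBall (0 : E3) r \ {0}, sInf (w '' sphere (0 : E3) r) ≤ w x := by
  intro x hx
  obtain ⟨hxball, hx0'⟩ := hx
  have hx0 : x ≠ 0 := hx0'
  have hxn : 0 < ‖x‖ := norm_pos_iff.mpr hx0
  have hxr : ‖x‖ ≤ r := by simpa [dist_zero_right] using mem_closedBall.mp hxball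
  set m := sInf (w '' sphere (0 : E3) r) with hmdef
  have hsub : sphere (0:E3) r ⊆ closedBall (0:E3) r \ {0} := by
    intro y hy
    have hyn : ‖y‖ = r := by simpa [dist_zero_right] using mem_sphere.mp hy
    refine ⟨mem_closedBall.mpr (by simp [dist_zero_right, hyn]), ?_⟩
    simp only [Set.mem_singleton_iff]
    intro h; rw [h] at hyn; simp at hyn; linarith
  have hbdd : BddBelow (w '' sphere (0:E3) r) := by
    refine ⟨0, fun v hv => ?_⟩
    obtain ⟨y, hy, rfl⟩ := hv
    exact hwnonneg y (hsub hy)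
  have hsne : (sphere (0:E3) r).Nonempty := NormedSpace.sphere_nonempty.mpr hr.le
  have hm0 : 0 ≤ m := by
    apply le_csInf (hsne.image w)
    rintro v ⟨y, hy, rfl⟩
    exact hwnonneg y (hsub hy)
  have hsphere_le : ∀ y ∈ sphere (0:E3) r, m ≤ w y := fun y hy =>
    csInf_le hbdd ⟨y, hy, rfl⟩
  rcases eq_or_lt_of_le hxr with heq | hlt
  · exact hsphere_le x (by simp [mem_sphere, dist_zero_right, heq])
  -- interior case
  have hKx : 0 ≤ m * (hbar x - 1/r) := by
    apply mul_nonneg hm0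
    rw [hbar_eq]
    have h1 : r⁻¹ ≤ ‖x‖⁻¹ := inv_anti₀ hxn hxr
    simp only [one_div]
    linarith
  have hmain : ∀ ε : ℝ, 0 < ε → 0 ≤ w x - m + ε * m * (hbar x - 1/r) := by
    intro ε hε
    have hηest : ∀ η : ℝ, 0 < η →
        -(η * r^2) ≤ w x - m + ε * m * (hbar x - 1/r) - η * gfun x := by
      intro η hη
      set δ := min (‖x‖/2) (r⁻¹ + ε⁻¹)⁻¹ with hδdef
      have hδpos : 0 < δ := lt_min (by linarith) (by positivity)
      have hδx : δ < ‖x‖ := lt_of_le_of_lt (min_le_left _ _) (by linarith)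
      have hδinv : r⁻¹ + ε⁻¹ ≤ δ⁻¹ := by
        rw [← inv_inv (r⁻¹ + ε⁻¹)]
        exact inv_anti₀ hδpos (min_le_right _ _)
      have hδr : δ ≤ r := by
        by_contra hc
        push_neg at hc
        have h2 : δ⁻¹ < r⁻¹ := by
          apply inv_strictAnti₀ hr hc
        have hεi : 0 < ε⁻¹ := by positivity
        linarith
      set A := closedBall (0:E3) r \ ball (0:E3) δ with hAdef
      have hA0 : ∀ z ∈ A, z ≠ (0:E3) := by
        intro z hz h0
        exact hz.2 (by rw [h0]; exact mem_ball_self hδpos)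
      have hAsub : A ⊆ closedBall (0:E3) r \ {0} := fun z hz => ⟨hz.1, hA0 z hz⟩
      have hAcomp : IsCompact A := (isCompact_closedBall _ _).diff isOpen_ball
      have hxA : x ∈ A := by
        refine ⟨hxball, ?_⟩
        simp only [mem_ball, dist_zero_right, Set.mem_setOf_eq, not_lt]
        exact hδx.le
      set vfun := fun y => w y + (ε*m) * hbar y + (-η) * gfun y + (-m - ε*m*(1/r)) with hvdef
      have hvcont : ContinuousOn vfun A := by
        have hg : Continuous gfun := by
          apply continuous_finset_sum
          intro i _
          exact ((P i).continuous).pow 2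
        exact (((hwcont.mono hAsub).add
          (continuousOn_const.mul (hbar_continuousOn hA0))).add
          (continuousOn_const.mul hg.continuousOn)).add continuousOn_const
      obtain ⟨p, hpA, hpmin⟩ := hAcomp.exists_isMinOn ⟨x, hxA⟩ hvcont
      set U := ball (0:E3) r \ closedBall (0:E3) δ with hUdef
      have hUopen : IsOpen U := isOpen_ball.sdiff isClosed_closedBall
      have hUA : U ⊆ A := fun z hz =>
        ⟨ball_subset_closedBall hz.1, fun hb => hz.2 (ball_subset_closedBall hb)⟩
      have hpU : p ∉ U := by
        intro hpU
        have hU0 : ∀ z ∈ U, z ≠ (0:E3) := fun z hz h0 =>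
          hz.2 (by rw [h0]; exact mem_closedBall_self hδpos.le)
        have hUsub : U ⊆ ball (0:E3) r \ {0} := fun z hz => ⟨hz.1, hU0 z hz⟩
        have hloc : IsLocalMin vfun p :=
          hpmin.isLocalMin (Filter.mem_of_superset (hUopen.mem_nhds hpU) hUA)
        have hk := key hUopen hU0 (hwC2.mono hUsub) hpU (ε*m) (-η) (-m - ε*m*(1/r)) hloc
        have hlp := hlap p (hUsub hpU)
        linarith
      have hpr : ‖p‖ ≤ r := by simpa [dist_zero_right] using hpA.1
      have hpδ : δ ≤ ‖p‖ := by
        have h2 := hpA.2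
        simp only [mem_ball, dist_zero_right, not_lt] at h2
        exact h2
      have hcases : ‖p‖ = r ∨ ‖p‖ = δ := by
        by_contra hc
        push_neg at hc
        apply hpU
        constructor
        · exact mem_ball.mpr (by rw [dist_zero_right]; exact lt_of_le_of_ne hpr hc.1)
        · intro hmem
          have : ‖p‖ ≤ δ := by simpa [dist_zero_right] using mem_closedBall.mp hmem
          exact hc.2 (le_antisymm this hpδ)
      have hvp : -(η * r^2) ≤ vfun p := by
        rcases hcases with h | h
        · have hpw : m ≤ w p := hsphere_le p (by simp [mem_sphere, dist_zero_right, h])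
          have hb1 : hbar p = 1/r := by rw [hbar_eq, h, one_div]
          have hg1 : gfun p = r^2 := by rw [gfun_eq, h]
          rw [hvdef]
          simp only [hb1, hg1]
          linarith
        · have hpw : 0 ≤ w p := hwnonneg p (hAsub hpA)
          have hb1 : hbar p = δ⁻¹ := by rw [hbar_eq, h]
          have hg1 : gfun p = δ^2 := by rw [gfun_eq, h]
          have hstep : 1 ≤ ε * (δ⁻¹ - r⁻¹) := by
            have h2 : ε⁻¹ ≤ δ⁻¹ - r⁻¹ := by linarith
            calc (1:ℝ) = ε * ε⁻¹ := by rw [mul_inv_cancel₀ hε.ne']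
            _ ≤ ε * (δ⁻¹ - r⁻¹) := by
                apply mul_le_mul_of_nonneg_left h2 hε.le
          have hηδ : η * δ^2 ≤ η * r^2 := by
            apply mul_le_mul_of_nonneg_left _ hη.le
            nlinarith
          rw [hvdef]
          simp only [hb1, hg1]
          have hm1 : 0 ≤ m * (ε * (δ⁻¹ - r⁻¹) - 1) :=
            mul_nonneg hm0 (by linarith)
          have expand : w p + ε*m * δ⁻¹ + (-η) * δ^2 + (-m - ε*m*(1/r))
              = w p + m * (ε * (δ⁻¹ - r⁻¹) - 1) - η * δ^2 := by
            rw [one_div]; ring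
          rw [expand]
          linarith
      have hvx : vfun p ≤ vfun x := hpmin hxA
      have hvxe : vfun x = w x - m + ε * m * (hbar x - 1/r) - η * gfun x := by
        rw [hvdef]; rw [one_div]; ring
      rw [hvxe] at hvx
      calc -(η * r^2) ≤ vfun p := hvp
      _ ≤ _ := hvx
    -- let η → 0
    by_contra hc
    push_neg at hc
    have hgx : gfun x < r^2 := by
      rw [gfun_eq]
      nlinarith
    set AA := w x - m + ε * m * (hbar x - 1/r) with hAAdef
    set η₀ := AA / (gfun x - r^2) with hη₀def
    have hη₀pos : 0 < η₀ := div_pos_of_neg_of_neg hc (by linarith)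
    have h2 := hηest (η₀/2) (by linarith)
    have h4 : η₀ * (gfun x - r^2) = AA := by
      rw [hη₀def]
      exact div_mul_cancel₀ AA (by linarith)
    have h5 : η₀ * gfun x - η₀ * r^2 = AA := by rw [← h4]; ring
    clear_value AA η₀
    linarith [h2, h5]
  -- let ε → 0
  by_contra hcon
  push_neg at hcon
  rcases eq_or_lt_of_le hKx with h0 | hKpos
  · have h1 := hmain 1 one_pos
    have : (1:ℝ) * m * (hbar x - 1/r) = m * (hbar x - 1/r) := by ring
    rw [this, ← h0] at h1
    linarith
  · set K := m * (hbar x - 1/r) with hKdef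
    have hK : 0 < K := hKpos
    have hε2 : 0 < (m - w x)/(2*K) := by
      apply div_pos (by linarith) (by linarith)
    have h1 := hmain _ hε2
    have h2 : (m - w x)/(2*K) * m * (hbar x - 1/r) = (m - w x)/2 := by
      rw [mul_assoc, ← hKdef]
      field_simp
    rw [h2] at h1
    linarith

theorem stmt_11 (r : ℝ) (hr : 0 < r) (w : E3 → ℝ)
    (hwcont : ContinuousOn w (closedBall (0 : E3) r \ {0}))
    (hwC2 : ContDiffOn ℝ 2 w (ball (0 : E3) r \ {0}))
    (hwnonneg : ∀ x ∈ closedBall (0 : E3) r \ {0}, 0 ≤ w x)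
    (hlap : ∀ x ∈ ball (0 : E3) r \ {0}, lap w x ≤ 0) :
    ∀ x ∈ closedBall (0 : E3) r \ {0}, sInf (w '' sphere (0 : E3) r) ≤ w x :=
  stmt_11_aux r hr w hwcont hwC2 hwnonneg hlap
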